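/- arXiv:2109.09357 — 6 statements merged into one kernel-verified Lean document; each statement's English description precedes it below -/
import Mathlib

section
/- Suppose s > 0, θ ≥ 1, η ∈ (0,1], and λ(1-η) > s(θ+1). Then the function p(x) = x^{(λ/s)(1-η) - θ - 1} (1-x)^{θ-1} exp(-ληx/s) on (0,1) attains its maximum at x̂ = (λ - 2s - √((λ-2s)² - 4λη[λ(1-η) - s(θ+1)]))/(2λη), and the quantity under the square root is nonnegative. -/
open Set Real

lemma stmt3_aux (a b c : ℝ) (ha : 0 < a) (hb : 0 ≤ b) (hc : 0 < c) :
    0 ≤ (a+b+c)^2 - 4*a*c ∧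
    ((a+b+c) - Real.sqrt ((a+b+c)^2 - 4*a*c)) / (2*c) ∈ Icc (0:ℝ) 1 ∧
    ∀ x ∈ Icc (0:ℝ) 1,
      x ^ a * (1-x) ^ b * Real.exp (-(c*x))
        ≤ (((a+b+c) - Real.sqrt ((a+b+c)^2 - 4*a*c)) / (2*c)) ^ a
          * (1 - ((a+b+c) - Real.sqrt ((a+b+c)^2 - 4*a*c)) / (2*c)) ^ b
          * Real.exp (-(c * (((a+b+c) - Real.sqrt ((a+b+c)^2 - 4*a*c)) / (2*c)))) := by
  set S : ℝ := a + b + c with hSdef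
  have hS : 0 < S := by positivity
  have hd : 0 ≤ S^2 - 4*a*c := by
    nlinarith [sq_nonneg (a - c), sq_nonneg b, mul_nonneg hb ha.le, mul_nonneg hb hc.le]
  set r : ℝ := Real.sqrt (S^2 - 4*a*c) with hrdef
  have hr0 : 0 ≤ r := Real.sqrt_nonneg _
  have hr2 : r^2 = S^2 - 4*a*c := Real.sq_sqrt hd
  have hrS : r < S := by
    rw [hrdef]
    exact (Real.sqrt_lt' hS).2 (by nlinarith)
  set t : ℝ := (S - r) / (2*c) with htdef
  have ht0 : 0 < t := div_pos (by linarith) (by linarith)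
  have hSr : S - 2*c ≤ r := by
    rcases le_or_gt (S - 2*c) 0 with h | h
    · linarith
    · rw [hrdef]
      exact (Real.le_sqrt h.le hd).2 (by nlinarith [mul_nonneg hb hc.le])
  have hcr : 2*c - S ≤ r := by
    rcases le_or_gt (2*c - S) 0 with h | h
    · linarith
    · rw [hrdef]
      exact (Real.le_sqrt h.le hd).2 (by nlinarith [mul_nonneg hb hc.le])
  have ht1 : t ≤ 1 := by
    rw [htdef, div_le_one (by linarith)]
    linarith
  have h2ct : 2*c*t = S - r := by
    rw [htdef]; field_simp
  have hqt : c*t^2 - S*t + a = 0 := by nlinarith [hr2, h2ct]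
  -- factorization of the quadratic
  have hfac : ∀ x : ℝ, c*x^2 - S*x + a = (t - x) * (S - c*(t+x)) := by
    intro x; nlinarith [hqt]
  -- the function and its derivative
  set P : ℝ → ℝ := fun x => x ^ a * (1-x) ^ b * Real.exp (-(c*x)) with hPdef
  have hderiv : ∀ x : ℝ, 0 < x → x < 1 →
      HasDerivAt P (x^(a-1) * (1-x)^(b-1) * Real.exp (-(c*x)) * (c*x^2 - S*x + a)) x := by
    intro x hx0 hx1
    have hx1' : (0:ℝ) < 1 - x := by linarith
    have d1 : HasDerivAt (fun y : ℝ => y ^ a) (a * x^(a-1)) x :=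
      Real.hasDerivAt_rpow_const (Or.inl hx0.ne')
    have d2 : HasDerivAt (fun y : ℝ => (1 - y) ^ b) (b * (1-x)^(b-1) * (-1)) x := by
      have h2' : HasDerivAt (fun y : ℝ => 1 - y) (-1) x := (hasDerivAt_id x).const_sub 1
      exact (Real.hasDerivAt_rpow_const (Or.inl hx1'.ne')).comp x h2'
    have d3 : HasDerivAt (fun y : ℝ => Real.exp (-(c*y))) (Real.exp (-(c*x)) * (-c)) x := by
      have h3' : HasDerivAt (fun y : ℝ => -(c*y)) (-c) x := by
        simpa using ((hasDerivAt_id x).const_mul c).fun_neg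
      exact (Real.hasDerivAt_exp _).comp x h3'
    have := (d1.mul d2).mul d3
    convert this using 1
    · rfl
    · rfl
    · rfl
    have e1 : x ^ a = x ^ (a-1) * x := by
      rw [← Real.rpow_add_one hx0.ne' (a-1)]; ring_nf
    have e2 : (1-x) ^ b = (1-x) ^ (b-1) * (1-x) := by
      rw [← Real.rpow_add_one hx1'.ne' (b-1)]; ring_nf
    simp only [Pi.mul_apply]
    rw [e1, e2, hSdef]; ring
  have hcont : Continuous P := by
    have c1 : Continuous fun y : ℝ => y ^ a :=
      continuous_iff_continuousAt.2 fun x => Real.continuousAt_rpow_const x a (Or.inr ha.le)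
    have c2 : Continuous fun y : ℝ => (1 - y) ^ b := by
      have : Continuous fun z : ℝ => z ^ b :=
        continuous_iff_continuousAt.2 fun x => Real.continuousAt_rpow_const x b (Or.inr hb)
      exact this.comp (continuous_const.sub continuous_id)
    exact ((c1.mul c2).mul (Real.continuous_exp.comp ((continuous_const.mul continuous_id).neg)))
  have hmono : MonotoneOn P (Icc 0 t) := by
    apply monotoneOn_of_deriv_nonneg (convex_Icc 0 t) hcont.continuousOn
    · intro x hx
      rw [interior_Icc] at hx
      exact (hderiv x hx.1 (lt_of_lt_of_le hx.2 ht1)).differentiableAt.differentiableWithinAt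
    · intro x hx
      rw [interior_Icc] at hx
      have hx1 : x < 1 := lt_of_lt_of_le hx.2 ht1
      rw [(hderiv x hx.1 hx1).deriv]
      have hq : 0 ≤ c*x^2 - S*x + a := by
        rw [hfac]
        apply mul_nonneg (by linarith [hx.2])
        nlinarith [hx.2, h2ct, hr0]
      have h1x : (0:ℝ) ≤ 1 - x := by linarith
      exact mul_nonneg (mul_nonneg (mul_nonneg (Real.rpow_nonneg hx.1.le _)
        (Real.rpow_nonneg h1x _)) (Real.exp_pos _).le) hq
  have hanti : AntitoneOn P (Icc t 1) := by
    apply antitoneOn_of_deriv_nonpos (convex_Icc t 1) hcont.continuousOn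
    · intro x hx
      rw [interior_Icc] at hx
      exact (hderiv x (lt_trans ht0 hx.1) hx.2).differentiableAt.differentiableWithinAt
    · intro x hx
      rw [interior_Icc] at hx
      have hx0 : 0 < x := lt_trans ht0 hx.1
      rw [(hderiv x hx0 hx.2).deriv]
      have hq : c*x^2 - S*x + a ≤ 0 := by
        rw [hfac]
        apply mul_nonpos_iff.2 (Or.inr ⟨by linarith [hx.1], ?_⟩)
        nlinarith [hx.1, hx.2, h2ct, hcr]
      have h1x : (0:ℝ) ≤ 1 - x := by linarith [hx.2]
      exact mul_nonpos_iff.2 (Or.inl ⟨mul_nonneg (mul_nonneg (Real.rpow_nonneg hx0.le _)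
        (Real.rpow_nonneg h1x _)) (Real.exp_pos _).le, hq⟩)
  refine ⟨hd, ⟨ht0.le, ht1⟩, ?_⟩
  intro x hx
  rcases le_total x t with h | h
  · exact hmono ⟨hx.1, h⟩ ⟨ht0.le, le_refl t⟩ h
  · exact hanti ⟨le_refl t, ht1⟩ ⟨h, hx.2⟩ h

/-- For `s > 0`, `θ ≥ 1`, `η ∈ (0,1]` and `λ(1-η) > s(θ+1)`, the steady-state density
`p(x) = x^{(λ/s)(1-η)-θ-1}(1-x)^{θ-1}exp(-ληx/s)` attains its maximum over `[0,1]` at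
`x̂ = (λ - 2s - √((λ-2s)² - 4λη[λ(1-η)-s(θ+1)]))/(2λη)`, the discriminant being nonnegative. -/
theorem stmt_3 (s θ η lam : ℝ) (hs : 0 < s) (hθ : 1 ≤ θ) (hη0 : 0 < η) (hη1 : η ≤ 1)
    (hlam : lam * (1 - η) > s * (θ + 1)) :
    0 ≤ (lam - 2*s)^2 - 4*lam*η*(lam*(1-η) - s*(θ+1)) ∧
    (lam - 2*s - Real.sqrt ((lam - 2*s)^2 - 4*lam*η*(lam*(1-η) - s*(θ+1)))) / (2*lam*η)
      ∈ Icc (0:ℝ) 1 ∧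
    ∀ x ∈ Icc (0:ℝ) 1,
      x ^ ((lam/s)*(1-η) - θ - 1) * (1-x) ^ (θ-1) * Real.exp (-(lam*η*x)/s)
        ≤ ((lam - 2*s - Real.sqrt ((lam - 2*s)^2 - 4*lam*η*(lam*(1-η) - s*(θ+1)))) / (2*lam*η))
            ^ ((lam/s)*(1-η) - θ - 1)
          * (1 - (lam - 2*s - Real.sqrt ((lam - 2*s)^2 - 4*lam*η*(lam*(1-η) - s*(θ+1)))) / (2*lam*η))
            ^ (θ-1)
          * Real.exp (-(lam*η*((lam - 2*s - Real.sqrt ((lam - 2*s)^2 - 4*lam*η*(lam*(1-η) - s*(θ+1)))) / (2*lam*η)))/s) := by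
  have hst : 0 < s * (θ + 1) := by nlinarith
  have hη1' : η < 1 := by
    by_contra h
    push_neg at h
    have h0 : 1 - η = 0 := by linarith
    rw [h0, mul_zero] at hlam
    linarith
  have hlam0 : 0 < lam := by nlinarith
  have ha : 0 < (lam/s)*(1-η) - θ - 1 := by
    have key : θ + 1 < lam*(1-η)/s := (lt_div_iff₀ hs).mpr (by linarith)
    have heq : lam/s*(1-η) = lam*(1-η)/s := by ring
    linarith
  have hb : (0:ℝ) ≤ θ - 1 := by linarith
  have hc : 0 < lam*η/s := div_pos (mul_pos hlam0 hη0) hs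
  obtain ⟨h1, h2, h3⟩ := stmt3_aux ((lam/s)*(1-η) - θ - 1) (θ-1) (lam*η/s) ha hb hc
  have hD : (lam - 2*s)^2 - 4*lam*η*(lam*(1-η) - s*(θ+1))
      = s^2 * (((lam/s)*(1-η) - θ - 1 + (θ-1) + lam*η/s)^2
        - 4*((lam/s)*(1-η) - θ - 1)*(lam*η/s)) := by
    field_simp
    ring
  have hs2 : Real.sqrt ((lam - 2*s)^2 - 4*lam*η*(lam*(1-η) - s*(θ+1)))
      = s * Real.sqrt (((lam/s)*(1-η) - θ - 1 + (θ-1) + lam*η/s)^2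
        - 4*((lam/s)*(1-η) - θ - 1)*(lam*η/s)) := by
    rw [hD, Real.sqrt_mul (sq_nonneg s), Real.sqrt_sq hs.le]
  have hxhat : (lam - 2*s - Real.sqrt ((lam - 2*s)^2 - 4*lam*η*(lam*(1-η) - s*(θ+1)))) / (2*lam*η)
      = (((lam/s)*(1-η) - θ - 1 + (θ-1) + lam*η/s)
          - Real.sqrt (((lam/s)*(1-η) - θ - 1 + (θ-1) + lam*η/s)^2
            - 4*((lam/s)*(1-η) - θ - 1)*(lam*η/s))) / (2*(lam*η/s)) := by
    rw [hs2]
    field_simp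
    ring
  refine ⟨?_, ?_, ?_⟩
  · rw [hD]; exact mul_nonneg (sq_nonneg s) h1
  · rw [hxhat]; exact h2
  · intro x hx
    have hexp : ∀ y : ℝ, -(lam*η*y)/s = -(lam*η/s*y) := fun y => by ring
    rw [hxhat]
    simp only [hexp]
    exact h3 x hx
end

section
/- Let s > 0, θ ≥ 1, η ∈ (0,1]. Define x̂(λ) = (λ - 2s - √((λ-2s)² - 4λη[λ(1-η) - s(θ+1)]))/(2λη) for λ sufficiently large that λ(1-η) > s(θ+1) (or for all large λ when η = 1). Then lim_{λ→∞} x̂(λ) = 1 if η < 1/2 and lim_{λ→∞} x̂(λ) = 1/η - 1 if η ≥ 1/2. -/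
open Filter Topology

/-- Large-λ limit of the modal composition
`x̂(λ) = (λ - 2s - √((λ-2s)² - 4λη[λ(1-η)-s(θ+1)]))/(2λη)`: it tends to `1` when `η < 1/2`
and to `1/η - 1` when `η ≥ 1/2`. -/
theorem stmt_4 (s θ η : ℝ) (hs : 0 < s) (hθ : 1 ≤ θ) (hη0 : 0 < η) (hη1 : η ≤ 1) :
    (η < 1/2 → Tendsto (fun lam : ℝ =>
        (lam - 2*s - Real.sqrt ((lam - 2*s)^2 - 4*lam*η*(lam*(1-η) - s*(θ+1)))) / (2*lam*η))
      atTop (𝓝 1)) ∧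
    (1/2 ≤ η → Tendsto (fun lam : ℝ =>
        (lam - 2*s - Real.sqrt ((lam - 2*s)^2 - 4*lam*η*(lam*(1-η) - s*(θ+1)))) / (2*lam*η))
      atTop (𝓝 (1/η - 1))) := by
  have hη0' : η ≠ 0 := ne_of_gt hη0
  set F : ℝ → ℝ := fun t =>
    ((1 - 2*s*t) - Real.sqrt ((1 - 2*s*t)^2 - 4*η*((1-η) - s*(θ+1)*t))) / (2*η) with hF
  have hFc : Continuous F := by
    apply Continuous.div_const
    exact (by continuity : Continuous fun t : ℝ => (1 - 2*s*t)).sub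
      (Real.continuous_sqrt.comp (by continuity))
  have hF0 : F 0 = (1 - |1 - 2*η|) / (2*η) := by
    have : (1 - 2*s*0)^2 - 4*η*((1-η) - s*(θ+1)*0) = (1 - 2*η)^2 := by ring
    simp only [hF, this, Real.sqrt_sq_eq_abs]
    ring_nf
  have hinv : Tendsto (fun lam : ℝ => lam⁻¹) atTop (𝓝 0) := tendsto_inv_atTop_zero
  have hcomp : Tendsto (fun lam : ℝ => F lam⁻¹) atTop (𝓝 ((1 - |1 - 2*η|) / (2*η))) := by
    rw [← hF0]
    exact (hFc.continuousAt.tendsto).comp hinv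
  have key : Tendsto (fun lam : ℝ =>
      (lam - 2*s - Real.sqrt ((lam - 2*s)^2 - 4*lam*η*(lam*(1-η) - s*(θ+1)))) / (2*lam*η))
      atTop (𝓝 ((1 - |1 - 2*η|) / (2*η))) := by
    apply hcomp.congr'
    filter_upwards [eventually_gt_atTop (0:ℝ)] with lam hlam
    have hlne : lam ≠ 0 := ne_of_gt hlam
    set A : ℝ := (lam - 2*s)^2 - 4*lam*η*(lam*(1-η) - s*(θ+1)) with hA
    have harg : (1 - 2*s*lam⁻¹)^2 - 4*η*((1-η) - s*(θ+1)*lam⁻¹) = A * (lam⁻¹)^2 := by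
      field_simp [hA]
      ring
    have hsq : Real.sqrt (A * (lam⁻¹)^2) = Real.sqrt A * lam⁻¹ := by
      rw [Real.sqrt_mul' A (sq_nonneg _), Real.sqrt_sq (by positivity : (0:ℝ) ≤ lam⁻¹)]
    have hFval : F lam⁻¹ = ((1 - 2*s*lam⁻¹) - Real.sqrt A * lam⁻¹) / (2*η) := by
      simp only [hF, harg, hsq]
    rw [hFval, div_eq_div_iff (by positivity) (by positivity)]
    field_simp
  constructor
  · intro hlt
    have habs : |1 - 2*η| = 1 - 2*η := abs_of_nonneg (by linarith)
    have : (1 - |1 - 2*η|) / (2*η) = 1 := by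
      rw [habs]; field_simp; ring
    rwa [this] at key
  · intro hge
    have habs : |1 - 2*η| = 2*η - 1 := by
      rw [abs_of_nonpos (by linarith)]; ring
    have : (1 - |1 - 2*η|) / (2*η) = 1/η - 1 := by
      rw [habs]; field_simp; ring
    rwa [this] at key
end

section
/- Consider the planar ODE system dx/dt = x[b_S - b_D + (b_D - b_S)x + (b_D - b_F)y], dy/dt = y[b_F - b_D + (b_D - b_S)x + (b_D - b_F)y] with b_F > b_S > b_D. If the initial condition (x₀, y₀) satisfies x₀ ≥ 0, y₀ > 0, x₀ + y₀ ≤ 1, then the solution satisfies y(t) → 1 and x(t) → 0 as t → ∞. -/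
open Filter Topology

lemma ode_exp_aux (f c C : ℝ → ℝ) (hC : ∀ t, HasDerivAt C (c t) t)
    (hf : ∀ t, HasDerivAt f (f t * c t) t) (t : ℝ) :
    f t = f 0 * Real.exp (C t - C 0) := by
  have hd : ∀ s, HasDerivAt (fun s => f s * Real.exp (-(C s))) 0 s := by
    intro s
    have h1 : HasDerivAt (fun s => f s * Real.exp (-(C s)))
        (f s * c s * Real.exp (-(C s)) + f s * (Real.exp (-(C s)) * -(c s))) s :=
      (hf s).mul ((hC s).neg.exp)
    convert h1 using 1
    ring
  have hc : f t * Real.exp (-(C t)) = f 0 * Real.exp (-(C 0)) :=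
    is_const_of_deriv_eq_zero (fun s => (hd s).differentiableAt)
      (fun s => (hd s).deriv) t 0
  have := congrArg (· * Real.exp (C t)) hc
  simp only [mul_assoc, ← Real.exp_add, neg_add_cancel, Real.exp_zero, mul_one] at this
  rw [this]
  congr 1
  ring_nf

/-- Global stability of the all-fast equilibrium for the within-protocell replicator ODE:
for `b_F > b_S > b_D` and initial condition `x₀ ≥ 0`, `y₀ > 0`, `x₀ + y₀ ≤ 1`,
solutions satisfy `y(t) → 1` and `x(t) → 0` as `t → ∞`. -/
theorem stmt_7 (bS bF bD : ℝ) (hFS : bF > bS) (hSD : bS > bD)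
    (x y : ℝ → ℝ)
    (hx : ∀ t : ℝ, HasDerivAt x (x t * (bS - bD + (bD - bS) * x t + (bD - bF) * y t)) t)
    (hy : ∀ t : ℝ, HasDerivAt y (y t * (bF - bD + (bD - bS) * x t + (bD - bF) * y t)) t)
    (hx0 : 0 ≤ x 0) (hy0 : 0 < y 0) (hsum : x 0 + y 0 ≤ 1) :
    Tendsto y atTop (𝓝 1) ∧ Tendsto x atTop (𝓝 0) := by
  have hxc : Continuous x := continuous_iff_continuousAt.mpr
    fun t => (hx t).differentiableAt.continuousAt
  have hyc : Continuous y := continuous_iff_continuousAt.mpr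
    fun t => (hy t).differentiableAt.continuousAt
  set g : ℝ → ℝ := fun t => bF - bD + (bD - bS) * x t + (bD - bF) * y t with hgdef
  have hgc : Continuous g := by
    apply Continuous.add
    apply Continuous.add continuous_const (continuous_const.mul hxc)
    exact continuous_const.mul hyc
  set G : ℝ → ℝ := fun t => ∫ s in (0:ℝ)..t, g s with hGdef
  have hG : ∀ t, HasDerivAt G (g t) t := fun t =>
    (hgc.integral_hasStrictDerivAt 0 t).hasDerivAt
  have hG0 : G 0 = 0 := intervalIntegral.integral_same
  set z : ℝ → ℝ := fun t => 1 - x t - y t with hzdef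
  -- explicit formulas
  have hyform : ∀ t, y t = y 0 * Real.exp (G t) := by
    intro t
    have := ode_exp_aux y g G hG (fun t => hy t) t
    simpa [hG0] using this
  have hxform : ∀ t, x t = x 0 * Real.exp (G t + (bS - bF) * t) := by
    intro t
    have hC : ∀ s, HasDerivAt (fun s => G s + (bS - bF) * s) (g s + (bS - bF)) s := by
      intro s
      have := (hG s).add ((hasDerivAt_id s).const_mul (bS - bF))
      exact this.congr_deriv (by ring)
    have hf : ∀ s, HasDerivAt x (x s * (g s + (bS - bF))) s := by
      intro s
      have heq : x s * (g s + (bS - bF)) =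
          x s * (bS - bD + (bD - bS) * x s + (bD - bF) * y s) := by
        simp only [hgdef]; ring
      rw [heq]; exact hx s
    have := ode_exp_aux x _ _ hC hf t
    simpa [hG0] using this
  have hzform : ∀ t, z t = z 0 * Real.exp (G t + (bD - bF) * t) := by
    intro t
    have hC : ∀ s, HasDerivAt (fun s => G s + (bD - bF) * s) (g s + (bD - bF)) s := by
      intro s
      have := (hG s).add ((hasDerivAt_id s).const_mul (bD - bF))
      exact this.congr_deriv (by ring)
    have hf : ∀ s, HasDerivAt z (z s * (g s + (bD - bF))) s := by
      intro s
      have h1 : HasDerivAt z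
          (0 - x s * (bS - bD + (bD - bS) * x s + (bD - bF) * y s)
             - y s * (bF - bD + (bD - bS) * x s + (bD - bF) * y s)) s :=
        ((hasDerivAt_const s (1:ℝ)).sub (hx s)).sub (hy s)
      convert h1 using 1
      simp only [hzdef, hgdef]
      ring
    have := ode_exp_aux z _ _ hC hf t
    simpa [hG0] using this
  have hz0 : 0 ≤ z 0 := by simp only [hzdef]; linarith
  set D : ℝ → ℝ := fun t =>
    x 0 * Real.exp ((bS - bF) * t) + y 0 + z 0 * Real.exp ((bD - bF) * t) with hDdef
  have hDpos : ∀ t, 0 < D t := by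
    intro t
    have h1 : 0 ≤ x 0 * Real.exp ((bS - bF) * t) := mul_nonneg hx0 (Real.exp_pos _).le
    have h2 : 0 ≤ z 0 * Real.exp ((bD - bF) * t) := mul_nonneg hz0 (Real.exp_pos _).le
    simp only [hDdef]
    linarith
  have hsum1 : ∀ t, Real.exp (G t) * D t = 1 := by
    intro t
    have : x t + y t + z t = 1 := by simp only [hzdef]; ring
    rw [hxform t, hyform t, hzform t] at this
    rw [← this]
    simp only [hDdef, Real.exp_add]
    ring
  have hGexp : ∀ t, Real.exp (G t) = (D t)⁻¹ := by
    intro t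
    field_simp
    have := hsum1 t
    rw [eq_div_iff (hDpos t).ne']
    linarith [this]
  -- limits
  have key : ∀ c : ℝ, c < 0 → Tendsto (fun t => Real.exp (c * t)) atTop (𝓝 0) := by
    intro c hc
    have h1 : Tendsto (fun t : ℝ => (-c) * t) atTop atTop :=
      Tendsto.const_mul_atTop (by linarith) tendsto_id
    have := Real.tendsto_exp_neg_atTop_nhds_zero.comp h1
    simpa only [Function.comp_def, neg_mul, neg_neg] using this
  have hDlim : Tendsto D atTop (𝓝 (y 0)) := by
    have h1 := (tendsto_const_nhds (x := x 0)).mul (key (bS - bF) (by linarith))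
    have h2 := (tendsto_const_nhds (x := z 0)).mul (key (bD - bF) (by linarith))
    have := (h1.add (tendsto_const_nhds (x := y 0))).add h2
    simpa [hDdef] using this
  have hy1 : Tendsto y atTop (𝓝 1) := by
    have h1 : Tendsto (fun t => y 0 * (D t)⁻¹) atTop (𝓝 (y 0 * (y 0)⁻¹)) :=
      tendsto_const_nhds.mul (hDlim.inv₀ (ne_of_gt hy0))
    have h2 : (fun t => y 0 * (D t)⁻¹) = y := by
      funext t; rw [hyform t, hGexp t]
    rw [h2] at h1
    rwa [mul_inv_cancel₀ (ne_of_gt hy0)] at h1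
  refine ⟨hy1, ?_⟩
  have h1 : Tendsto (fun t => x 0 * Real.exp ((bS - bF) * t) * (D t)⁻¹) atTop
      (𝓝 (x 0 * 0 * (y 0)⁻¹)) :=
    (tendsto_const_nhds.mul (key (bS - bF) (by linarith))).mul
      (hDlim.inv₀ (ne_of_gt hy0))
  have h2 : (fun t => x 0 * Real.exp ((bS - bF) * t) * (D t)⁻¹) = x := by
    funext t
    rw [hxform t, Real.exp_add, hGexp t]
    ring
  rw [h2] at h1
  simpa using h1
end

section
/- Consider the ODE dy/dt = y[b_F(1-y) + b_D(x+y-1) - b_S x] where 0 ≤ x ≤ 1-y and b_F > b_S > b_D. Then dy/dt ≥ (b_F - b_S) y (1-y); consequently if w solves the logistic equation dw/dt = (b_F - b_S) w(1-w) with w(0) = y(0), then y(t) ≥ w(t) for all t ≥ 0. -/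
open Set Real

/-- Comparison lemma for the fast-replicator fraction: along the trimorphic within-protocell
dynamics, `dy/dt = y[b_F(1-y) + b_D(x+y-1) - b_S x] ≥ (b_F - b_S) y (1-y)` whenever
`0 ≤ y` and `0 ≤ x ≤ 1 - y`; consequently `y` dominates the solution `w` of the logistic
equation `dw/dt = (b_F - b_S) w (1-w)` with `w(0) = y(0)`. -/
theorem stmt_8 (bS bF bD : ℝ) (hFS : bF > bS) (hSD : bS > bD)
    (x y w : ℝ → ℝ)
    (hrange : ∀ t : ℝ, 0 ≤ t → 0 ≤ y t ∧ 0 ≤ x t ∧ x t ≤ 1 - y t)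
    (hy : ∀ t : ℝ, 0 ≤ t →
      HasDerivAt y (y t * (bF * (1 - y t) + bD * (x t + y t - 1) - bS * x t)) t)
    (hw : ∀ t : ℝ, 0 ≤ t → HasDerivAt w ((bF - bS) * w t * (1 - w t)) t)
    (hw0 : w 0 = y 0) :
    (∀ t : ℝ, 0 ≤ t →
      (bF - bS) * y t * (1 - y t)
        ≤ y t * (bF * (1 - y t) + bD * (x t + y t - 1) - bS * x t)) ∧
    (∀ t : ℝ, 0 ≤ t → w t ≤ y t) := by
  have part1 : ∀ t : ℝ, 0 ≤ t →
      (bF - bS) * y t * (1 - y t)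
        ≤ y t * (bF * (1 - y t) + bD * (x t + y t - 1) - bS * x t) := by
    intro t ht
    obtain ⟨hy0, hx0, hxy⟩ := hrange t ht
    nlinarith [mul_nonneg hy0 (mul_nonneg (sub_nonneg.2 hSD.le)
      (sub_nonneg.2 (by linarith : x t + y t ≤ 1)))]
  refine ⟨part1, fun t ht => ?_⟩
  set K : ℝ := (bF - bS) + 1 with hK
  -- for every ε > 0, w t - y t ≤ ε * exp (K * t)
  have key : ∀ ε : ℝ, 0 < ε → w t - y t ≤ ε * Real.exp (K * t) := by
    intro ε hε
    have main := image_le_of_deriv_right_lt_deriv_boundary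
      (f := fun s => w s - y s)
      (f' := fun s => (bF - bS) * w s * (1 - w s) -
        y s * (bF * (1 - y s) + bD * (x s + y s - 1) - bS * x s))
      (a := 0) (b := t)
      (B := fun s => ε * Real.exp (K * s)) (B' := fun s => ε * (Real.exp (K * s) * K))
      (fun s hs => (((hw s hs.1).sub (hy s hs.1)).continuousAt).continuousWithinAt)
      (fun s hs => ((hw s hs.1).sub (hy s hs.1)).hasDerivWithinAt)
      (by simp [hw0, hε.le])
      (fun s => by
        have h1 : HasDerivAt (fun s : ℝ => K * s) K s := by
          simpa using (hasDerivAt_id s).const_mul K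
        exact ((h1.exp).const_mul ε))
      ?_ (right_mem_Icc.2 ht)
    · simpa using main
    · intro s hs heq
      have hs0 : (0:ℝ) ≤ s := hs.1
      have hy0 : 0 ≤ y s := (hrange s hs0).1
      have hP := part1 s hs0
      have hws : w s = y s + ε * Real.exp (K * s) := by linarith [heq]
      have hexp : 0 < Real.exp (K * s) := Real.exp_pos _
      have hεe : 0 < ε * Real.exp (K * s) := mul_pos hε hexp
      have h2 : (bF - bS) * w s * (1 - w s) - (bF - bS) * y s * (1 - y s)
          = (bF - bS) * (ε * Real.exp (K * s)) * (1 - (w s + y s)) := by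
        rw [hws]; ring
      have h3 : 1 - (w s + y s) ≤ 1 := by
        rw [hws]; nlinarith
      have h4 : (bF - bS) * (ε * Real.exp (K * s)) * (1 - (w s + y s))
          ≤ (bF - bS) * (ε * Real.exp (K * s)) * 1 := by
        exact mul_le_mul_of_nonneg_left h3 (mul_nonneg (by linarith) hεe.le)
      have h5 : (bF - bS) * (ε * Real.exp (K * s)) * 1 < ε * (Real.exp (K * s) * K) := by
        have hKlt : (bF - bS) < K := by simp [hK]
        nlinarith
      linarith
  -- let ε → 0
  have hexp : 0 < Real.exp (K * t) := Real.exp_pos _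
  have : ∀ δ : ℝ, 0 < δ → w t - y t ≤ δ := by
    intro δ hδ
    have h := key (δ / Real.exp (K * t)) (by positivity)
    rwa [div_mul_cancel₀ _ (ne_of_gt hexp)] at h
  nlinarith [le_of_forall_pos_le_add (fun δ hδ => by linarith [this δ hδ] : ∀ δ > 0, w t - y t ≤ 0 + δ)]
end

section
/- Define λ*_FS(η) = sθ/(1-η) and λ*_FD(η) = (b_F - b_D)·2θ/(1 - η/2), where b_F - b_S = s and b_S - b_D > 0. Then λ*_FD(η) < λ*_FS(η) if and only if η > η_c, where η_c = [4(b_S - b_D) + 2(b_F - b_S)]/[4(b_S - b_D) + 3(b_F - b_S)]; moreover η_c ≥ 2/3 always, η_c → 1 as b_F → b_S (with b_S - b_D fixed positive), and η_c → 2/3 as b_F - b_S → ∞. -/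
open Filter Topology

/-- Comparison of coexistence thresholds `λ*_FS(η) = sθ/(1-η)` (with `s = b_F - b_S`) and
`λ*_FD(η) = (b_F - b_D)·2θ/(1 - η/2)`: `λ*_FD < λ*_FS` iff `η > η_c` where
`η_c = [4(b_S-b_D) + 2(b_F-b_S)]/[4(b_S-b_D) + 3(b_F-b_S)]`; moreover `η_c ≥ 2/3`,
`η_c → 1` as `b_F → b_S`, and `η_c → 2/3` as `b_F - b_S → ∞`. -/
theorem stmt_13 (bS bF bD θ η : ℝ) (hFS : bF > bS) (hSD : bS > bD)
    (hθ : 0 < θ) (hη0 : 0 ≤ η) (hη1 : η < 1) :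
    ((bF - bD) * 2 * θ / (1 - η/2) < (bF - bS) * θ / (1 - η) ↔
      η > (4*(bS - bD) + 2*(bF - bS)) / (4*(bS - bD) + 3*(bF - bS))) ∧
    (2/3 ≤ (4*(bS - bD) + 2*(bF - bS)) / (4*(bS - bD) + 3*(bF - bS))) ∧
    Tendsto (fun b : ℝ => (4*(bS - bD) + 2*(b - bS)) / (4*(bS - bD) + 3*(b - bS)))
      (𝓝 bS) (𝓝 1) ∧
    Tendsto (fun s : ℝ => (4*(bS - bD) + 2*s) / (4*(bS - bD) + 3*s))
      atTop (𝓝 (2/3)) := by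
  have hden : (0:ℝ) < 4*(bS - bD) + 3*(bF - bS) := by linarith
  have h4 : (0:ℝ) < 4*(bS - bD) := by linarith
  refine ⟨?_, ?_, ?_, ?_⟩
  · have h1 : (0:ℝ) < 1 - η/2 := by linarith
    have h2 : (0:ℝ) < 1 - η := by linarith
    rw [div_lt_div_iff₀ h1 h2, gt_iff_lt, div_lt_iff₀ hden]
    constructor
    · intro h
      by_contra h'
      push_neg at h'
      nlinarith [h, mul_nonneg hθ.le (sub_nonneg.mpr h')]
    · intro h
      nlinarith [mul_pos hθ (sub_pos.mpr h)]
  · rw [le_div_iff₀ hden]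
    linarith
  · have hc : ContinuousAt
        (fun b : ℝ => (4*(bS - bD) + 2*(b - bS)) / (4*(bS - bD) + 3*(b - bS))) bS := by
      apply ContinuousAt.div
      · fun_prop
      · fun_prop
      · simp
        linarith
    have := hc.tendsto
    convert this using 2
    rw [eq_comm, div_eq_one_iff_eq (by simp; linarith)]
    ring
  · have hnum : Tendsto (fun s : ℝ => 4*(bS - bD) * s⁻¹ + 2) atTop (𝓝 2) := by
      have := (tendsto_inv_atTop_zero.const_mul (4*(bS - bD))).add_const 2
      simpa using this
    have hden' : Tendsto (fun s : ℝ => 4*(bS - bD) * s⁻¹ + 3) atTop (𝓝 3) := by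
      have := (tendsto_inv_atTop_zero.const_mul (4*(bS - bD))).add_const 3
      simpa using this
    have h3 := hnum.div hden' (by norm_num)
    refine h3.congr' ?_
    filter_upwards [eventually_gt_atTop 0] with s hs
    simp only [Pi.div_apply]
    rw [div_eq_div_iff (by positivity) (by positivity)]
    field_simp
end

section
/- Let b_S > b_D, θ ≥ 1, η > 2/3, and suppose λ(3η/2 - 1) > 2(b_S - b_D)(θ+1). Define ẑ(λ) = (1/(λη))·[λ(2η-1) - 4(b_S - b_D) - √((λ(2η-1) - 4(b_S-b_D))² - 2λη[λ(3η/2 - 1) - 2(b_S - b_D)(θ+1)])]. Then lim_{λ→∞} ẑ(λ) = 3 - 2/η, and for η ∈ (2/3, 1) this limit is strictly less than the maximizer 2 - 1/η of G_SD, with gap equal to 1/η - 1. -/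
open Filter Topology

/-- The modal dimer fraction on the slow-dimer edge,
`ẑ(λ) = (1/(λη))[λ(2η-1) - 4(b_S-b_D) - √((λ(2η-1) - 4(b_S-b_D))² - 2λη[λ(3η/2-1) - 2(b_S-b_D)(θ+1)])]`,
tends to `3 - 2/η` as `λ → ∞`; for `η ∈ (2/3,1)` this limit is strictly less than the
maximizer `2 - 1/η` of `G_SD`, with gap `1/η - 1`. -/
theorem stmt_16 (bS bD θ η : ℝ) (hb : bS > bD) (hθ : 1 ≤ θ) (hη : 2/3 < η) (hη1 : η ≤ 1) :
    Tendsto (fun lam : ℝ =>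
      (1/(lam*η)) * (lam*(2*η - 1) - 4*(bS - bD)
        - Real.sqrt ((lam*(2*η - 1) - 4*(bS - bD))^2
            - 2*lam*η*(lam*(3*η/2 - 1) - 2*(bS - bD)*(θ + 1)))))
      atTop (𝓝 (3 - 2/η)) ∧
    (η < 1 → 3 - 2/η < 2 - 1/η ∧ (2 - 1/η) - (3 - 2/η) = 1/η - 1) := by
  have hη0 : 0 < η := lt_trans (by norm_num) hη
  set d := bS - bD with hd
  set g : ℝ → ℝ := fun t =>
    (1/η) * ((2*η - 1) - 4*d*t
      - Real.sqrt ((2*η - 1 - 4*d*t)^2 - 2*η*((3*η/2 - 1) - 2*d*(θ+1)*t))) with hg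
  constructor
  · -- limit part
    have hgc : ContinuousAt g 0 := by
      apply ContinuousAt.mul continuousAt_const
      apply ContinuousAt.sub
      · fun_prop
      · exact (Real.continuous_sqrt.continuousAt).comp (by fun_prop)
    have hg0 : g 0 = 3 - 2/η := by
      have h1 : (2*η - 1 - 4*d*0)^2 - 2*η*((3*η/2 - 1) - 2*d*(θ+1)*0) = (1 - η)^2 := by
        ring
      simp only [hg, h1]
      rw [Real.sqrt_sq (by linarith)]
      field_simp
      ring
    have hcomp : Tendsto (fun lam : ℝ => g lam⁻¹) atTop (𝓝 (3 - 2/η)) := by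
      have := hgc.tendsto
      rw [hg0] at this
      exact this.comp tendsto_inv_atTop_zero
    refine hcomp.congr' ?_
    filter_upwards [eventually_gt_atTop (0:ℝ)] with lam hlam
    have hlam0 : lam ≠ 0 := ne_of_gt hlam
    have hsq : ((lam*(2*η - 1) - 4*d)^2
            - 2*lam*η*(lam*(3*η/2 - 1) - 2*d*(θ + 1)))
        = lam^2 * ((2*η - 1 - 4*d*lam⁻¹)^2 - 2*η*((3*η/2 - 1) - 2*d*(θ+1)*lam⁻¹)) := by
      field_simp
    simp only [hg]
    rw [hsq, Real.sqrt_mul (sq_nonneg lam), Real.sqrt_sq hlam.le]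
    set s := Real.sqrt ((2*η - 1 - 4*d*lam⁻¹)^2 - 2*η*((3*η/2 - 1) - 2*d*(θ+1)*lam⁻¹))
    field_simp
  · intro hlt
    have h1 : 1 < 1/η := by rw [lt_div_iff₀ hη0]; linarith
    have h2 : 2/η = 2*(1/η) := by ring
    constructor
    · linarith
    · ring
end
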